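/- Let α ∈ (0,1) be irrational and let n be a positive integer. Then every factor w ∈ F_n(c_α) has height h(w) equal to either ⌊nα⌋ or ⌊nα⌋ + 1; exactly B_α(n) + 1 of the n+1 factors have height ⌊nα⌋ + 1, and exactly n − B_α(n) of them have height ⌊nα⌋. -/

import Mathlib

/-- The characteristic word with slope `α`: `c_α(n) = ⌊(n+2)α⌋ - ⌊(n+1)α⌋`. -/
noncomputable def cword (α : ℝ) (n : ℕ) : ℤ :=
  ⌊((n : ℝ) + 2) * α⌋ - ⌊((n : ℝ) + 1) * α⌋

/-- The set of factors of length `n` of a word `W : ℕ → ℤ`. -/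
def factorSet (W : ℕ → ℤ) (n : ℕ) : Set (Fin n → ℤ) :=
  {v | ∃ i : ℕ, ∀ j : Fin n, v j = W (i + j)}

/-- The height of a finite word: the number of components equal to 1. -/
def height {n : ℕ} (w : Fin n → ℤ) : ℕ :=
  (Finset.univ.filter (fun j : Fin n => w j = 1)).card

/-- `B α k` counts the integers `q` with `1 ≤ q < k` such that `{qα} < {kα}`. -/
noncomputable def B (α : ℝ) (k : ℕ) : ℕ :=
  ((Finset.Ico 1 k).filter (fun q : ℕ => Int.fract ((q : ℝ) * α) < Int.fract ((k : ℝ) * α))).card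

open Finset

noncomputable def wrdN (α x : ℝ) (j : ℕ) : ℤ := ⌊x + ((j:ℝ)+1)*α⌋ - ⌊x + (j:ℝ)*α⌋

noncomputable def wrd (α : ℝ) (n : ℕ) (x : ℝ) : Fin n → ℤ := fun j => wrdN α x j

noncomputable def tpt (α : ℝ) (j : ℕ) : ℝ := if j = 0 then 0 else Int.fract (-((j:ℝ)*α))

noncomputable def Ppts (α : ℝ) (n : ℕ) : Finset ℝ := (Finset.range (n+1)).image (tpt α)

noncomputable def mu (α : ℝ) (n : ℕ) (x : ℝ) : ℝ :=
  if h : ((Ppts α n).filter (fun p => p ≤ x)).Nonempty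
  then ((Ppts α n).filter (fun p => p ≤ x)).max' h else 0

lemma cword_eq (α : ℝ) (i j : ℕ) :
    cword α (i+j) = wrdN α (Int.fract (((i:ℝ)+1)*α)) j := by
  have key : ∀ c : ℝ, ⌊((i:ℝ)+1)*α + c⌋ = ⌊((i:ℝ)+1)*α⌋ + ⌊Int.fract (((i:ℝ)+1)*α) + c⌋ := by
    intro c
    conv_lhs => rw [← Int.floor_add_fract (((i:ℝ)+1)*α), add_assoc]
    rw [Int.floor_intCast_add]
  have e1 : ((↑(i+j):ℝ)+2)*α = ((i:ℝ)+1)*α + (((j:ℝ)+1)*α) := by push_cast; ring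
  have e2 : ((↑(i+j):ℝ)+1)*α = ((i:ℝ)+1)*α + ((j:ℝ)*α) := by push_cast; ring
  unfold cword wrdN
  rw [e1, e2, key, key]
  ring

lemma mem_factor_iff (α : ℝ) (n : ℕ) (v : Fin n → ℤ) :
    v ∈ factorSet (cword α) n ↔ ∃ m : ℕ, v = wrd α n (Int.fract (((m:ℝ)+1)*α)) := by
  constructor
  · rintro ⟨i, hi⟩
    exact ⟨i, funext fun j => by rw [hi j, cword_eq]; rfl⟩
  · rintro ⟨m, rfl⟩
    exact ⟨m, fun j => (cword_eq α m j).symm⟩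

lemma fract_nat_pos {α : ℝ} (hα : Irrational α) {j : ℕ} (hj : 1 ≤ j) :
    0 < Int.fract ((j:ℝ)*α) := by
  rcases lt_or_eq_of_le (Int.fract_nonneg ((j:ℝ)*α)) with h | h
  · exact h
  · exfalso
    have hirr : Irrational ((j:ℝ)*α) := hα.natCast_mul (by omega)
    have : (j:ℝ)*α = (⌊(j:ℝ)*α⌋ : ℝ) := by
      have := Int.fract ((j:ℝ)*α)
      unfold Int.fract at h
      linarith [h.symm]
    exact hirr.ne_int _ this

lemma fract_nat_ne {α : ℝ} (hα : Irrational α) {j k : ℕ} (hjk : j ≠ k) :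
    Int.fract ((j:ℝ)*α) ≠ Int.fract ((k:ℝ)*α) := by
  intro h
  obtain ⟨z, hz⟩ := Int.fract_eq_fract.mp h
  have hne : ((j:ℤ) - k) ≠ 0 := by
    intro hc; apply hjk; omega
  have hirr : Irrational ((((j:ℤ) - k : ℤ)) * α : ℝ) := hα.intCast_mul hne
  apply hirr.ne_int z
  push_cast
  push_cast at hz
  linarith

lemma tpt_eq {α : ℝ} (hα : Irrational α) {j : ℕ} (hj : 1 ≤ j) :
    tpt α j = 1 - Int.fract ((j:ℝ)*α) := by
  unfold tpt
  rw [if_neg (by omega)]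
  exact Int.fract_neg (ne_of_gt (fract_nat_pos hα hj))

lemma tpt_nonneg (α : ℝ) (j : ℕ) : 0 ≤ tpt α j := by
  unfold tpt; split
  · exact le_refl 0
  · exact Int.fract_nonneg _

lemma tpt_lt_one {α : ℝ} (hα : Irrational α) (h0 : 0 < α) (j : ℕ) : tpt α j < 1 := by
  unfold tpt; split
  · norm_num
  · exact Int.fract_lt_one _

lemma tpt_pos {α : ℝ} (hα : Irrational α) {j : ℕ} (hj : 1 ≤ j) : 0 < tpt α j := by
  rw [tpt_eq hα hj]
  have := Int.fract_lt_one ((j:ℝ)*α)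
  linarith

lemma tpt_inj {α : ℝ} (hα : Irrational α) {j k : ℕ} (h : tpt α j = tpt α k) : j = k := by
  by_contra hjk
  rcases Nat.eq_zero_or_pos j with rfl | hj
  · rcases Nat.eq_zero_or_pos k with rfl | hk
    · exact hjk rfl
    · have := tpt_pos hα hk
      rw [← h] at this
      simp [tpt] at this
  · rcases Nat.eq_zero_or_pos k with rfl | hk
    · have := tpt_pos hα hj
      rw [h] at this
      simp [tpt] at this
    · rw [tpt_eq hα hj, tpt_eq hα hk] at h
      exact fract_nat_ne hα hjk (by linarith)

lemma tpt_order {α : ℝ} (hα : Irrational α) {j k : ℕ} (hj : 1 ≤ j) (hk : 1 ≤ k) :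
    (tpt α j ≤ tpt α k ↔ Int.fract ((k:ℝ)*α) ≤ Int.fract ((j:ℝ)*α)) := by
  rw [tpt_eq hα hj, tpt_eq hα hk]
  constructor <;> intro <;> linarith

lemma floor_split {α : ℝ} (hα : Irrational α) {x : ℝ} (hx : x ∈ Set.Ico (0:ℝ) 1)
    {j : ℕ} (hj : 1 ≤ j) :
    ⌊x + (j:ℝ)*α⌋ = ⌊(j:ℝ)*α⌋ + (if tpt α j ≤ x then 1 else 0) := by
  have hfpos := fract_nat_pos hα hj
  have hflt := Int.fract_lt_one ((j:ℝ)*α)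
  have ht := tpt_eq hα hj
  have hsplit : x + (j:ℝ)*α = (x + Int.fract ((j:ℝ)*α)) + (⌊(j:ℝ)*α⌋ : ℝ) := by
    unfold Int.fract; ring
  rw [hsplit, Int.floor_add_intCast]
  by_cases hc : tpt α j ≤ x
  · rw [if_pos hc]
    have h1 : ⌊x + Int.fract ((j:ℝ)*α)⌋ = 1 := by
      rw [Int.floor_eq_iff]
      constructor
      · push_cast; rw [ht] at hc; linarith
      · push_cast; have := hx.2; linarith
    omega
  · rw [if_neg hc]
    push_neg at hc
    rw [ht] at hc
    have h1 : ⌊x + Int.fract ((j:ℝ)*α)⌋ = 0 := by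
      rw [Int.floor_eq_iff]
      constructor
      · push_cast; have := hx.1; linarith
      · push_cast; linarith
    omega

lemma psum (α x : ℝ) : ∀ k : ℕ, ∑ j ∈ Finset.range k, wrdN α x j = ⌊x + (k:ℝ)*α⌋ - ⌊x⌋
  | 0 => by simp
  | (k+1) => by
      rw [Finset.sum_range_succ, psum α x k]
      unfold wrdN
      push_cast
      ring

lemma wrdN_mem {α : ℝ} (h0 : 0 < α) (h1 : α < 1) (x : ℝ) (j : ℕ) :
    wrdN α x j = 0 ∨ wrdN α x j = 1 := by
  have hb1 : ⌊x + (j:ℝ)*α⌋ ≤ ⌊x + ((j:ℝ)+1)*α⌋ := Int.floor_le_floor (by nlinarith)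
  have hb2 : ⌊x + ((j:ℝ)+1)*α⌋ < ⌊x + (j:ℝ)*α⌋ + 2 := by
    rw [Int.floor_lt]
    have := Int.lt_floor_add_one (x + (j:ℝ)*α)
    push_cast
    nlinarith
  unfold wrdN
  omega

lemma height_wrd {α : ℝ} (h0 : 0 < α) (h1 : α < 1) (n : ℕ) {x : ℝ}
    (hx : x ∈ Set.Ico (0:ℝ) 1) :
    (height (wrd α n x) : ℤ) = ⌊x + (n:ℝ)*α⌋ := by
  have hx0 : ⌊x⌋ = 0 := Int.floor_eq_zero_iff.mpr hx
  have hcard : (height (wrd α n x) : ℤ) = ∑ j : Fin n, wrd α n x j := by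
    unfold height
    rw [Finset.card_filter]
    push_cast
    apply Finset.sum_congr rfl
    intro j _
    rcases wrdN_mem h0 h1 x (j:ℕ) with h | h <;> simp [wrd, h]
  rw [hcard]
  have hs : ∑ j : Fin n, wrd α n x j = ∑ j ∈ Finset.range n, wrdN α x j :=
    Fin.sum_univ_eq_sum_range (fun j => wrdN α x j) n
  rw [hs, psum, hx0]
  ring

lemma filterP_nonempty (α : ℝ) (n : ℕ) {x : ℝ} (hx0 : 0 ≤ x) :
    ((Ppts α n).filter (fun p => p ≤ x)).Nonempty := by
  refine ⟨0, Finset.mem_filter.mpr ⟨?_, hx0⟩⟩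
  exact Finset.mem_image.mpr ⟨0, by simp, by simp [tpt]⟩

lemma mu_mem (α : ℝ) (n : ℕ) {x : ℝ} (hx0 : 0 ≤ x) :
    mu α n x ∈ Ppts α n ∧ mu α n x ≤ x := by
  have h := filterP_nonempty α n hx0
  have := Finset.max'_mem _ h
  rw [Finset.mem_filter] at this
  unfold mu
  rw [dif_pos h]
  exact this

lemma le_mu (α : ℝ) (n : ℕ) {x p : ℝ} (hx0 : 0 ≤ x) (hp : p ∈ Ppts α n) (hpx : p ≤ x) :
    p ≤ mu α n x := by
  have h := filterP_nonempty α n hx0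
  unfold mu
  rw [dif_pos h]
  exact Finset.le_max' ((Ppts α n).filter (fun p => p ≤ x)) p
    (Finset.mem_filter.mpr ⟨hp, hpx⟩)

lemma tpt_mem_P (α : ℝ) {n j : ℕ} (hj : j ≤ n) : tpt α j ∈ Ppts α n :=
  Finset.mem_image.mpr ⟨j, Finset.mem_range.mpr (by omega), rfl⟩

lemma tpt_le_iff (α : ℝ) {n j : ℕ} (hj : j ≤ n) {x : ℝ} (hx0 : 0 ≤ x) :
    (tpt α j ≤ x ↔ tpt α j ≤ mu α n x) := by
  constructor
  · intro h; exact le_mu α n hx0 (tpt_mem_P α hj) h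
  · intro h; exact le_trans h (mu_mem α n hx0).2

lemma wrd_eq_of_mu {α : ℝ} (hα : Irrational α) (n : ℕ) {x y : ℝ}
    (hx : x ∈ Set.Ico (0:ℝ) 1) (hy : y ∈ Set.Ico (0:ℝ) 1)
    (hmu : mu α n x = mu α n y) : wrd α n x = wrd α n y := by
  have key : ∀ k : ℕ, k ≤ n → ⌊x + (k:ℝ)*α⌋ = ⌊y + (k:ℝ)*α⌋ := by
    intro k hk
    rcases Nat.eq_zero_or_pos k with rfl | hkpos
    · push_cast
      simp only [zero_mul, add_zero]
      rw [Int.floor_eq_zero_iff.mpr hx, Int.floor_eq_zero_iff.mpr hy]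
    · rw [floor_split hα hx hkpos, floor_split hα hy hkpos]
      have hiff : (tpt α k ≤ x) ↔ (tpt α k ≤ y) := by
        rw [tpt_le_iff α hk hx.1, hmu, ← tpt_le_iff α hk hy.1]
      by_cases hc : tpt α k ≤ x
      · rw [if_pos hc, if_pos (hiff.mp hc)]
      · rw [if_neg hc, if_neg (fun hh => hc (hiff.mpr hh))]
  funext j
  show wrdN α x j = wrdN α y j
  have h1 := key j (le_of_lt j.2)
  have h2 := key (j+1) j.2
  unfold wrdN
  push_cast at h2 ⊢
  omega

lemma mu_eq_of_wrd {α : ℝ} (hα : Irrational α) (n : ℕ) {x y : ℝ}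
    (hx : x ∈ Set.Ico (0:ℝ) 1) (hy : y ∈ Set.Ico (0:ℝ) 1)
    (hw : wrd α n x = wrd α n y) : mu α n x = mu α n y := by
  have hps : ∀ k : ℕ, k ≤ n → ⌊x + (k:ℝ)*α⌋ = ⌊y + (k:ℝ)*α⌋ := by
    intro k hk
    have hsum : ∑ j ∈ Finset.range k, wrdN α x j = ∑ j ∈ Finset.range k, wrdN α y j := by
      apply Finset.sum_congr rfl
      intro j hj
      have hjn : j < n := lt_of_lt_of_le (Finset.mem_range.mp hj) hk
      exact congrFun hw ⟨j, hjn⟩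
    rw [psum, psum] at hsum
    rw [Int.floor_eq_zero_iff.mpr hx, Int.floor_eq_zero_iff.mpr hy] at hsum
    omega
  have hiff : ∀ p ∈ Ppts α n, ((p ≤ x) ↔ (p ≤ y)) := by
    intro p hp
    obtain ⟨j, hj, rfl⟩ := Finset.mem_image.mp hp
    rw [Finset.mem_range] at hj
    rcases Nat.eq_zero_or_pos j with rfl | hjpos
    · simp only [tpt, if_pos rfl]
      exact ⟨fun _ => hy.1, fun _ => hx.1⟩
    · have h := hps j (by omega)
      rw [floor_split hα hx hjpos, floor_split hα hy hjpos] at h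
      by_cases hc : tpt α j ≤ x <;> by_cases hc' : tpt α j ≤ y
      · exact iff_of_true hc hc'
      · rw [if_pos hc, if_neg hc'] at h; omega
      · rw [if_neg hc, if_pos hc'] at h; omega
      · exact iff_of_false hc hc'
  have hfe : (Ppts α n).filter (fun p => p ≤ x) = (Ppts α n).filter (fun p => p ≤ y) :=
    Finset.filter_congr (fun p hp => by simp [hiff p hp])
  unfold mu
  rw [hfe]

lemma small_fract_one {α : ℝ} (hα : Irrational α) {δ : ℝ} (hδ0 : 0 < δ) (hδ1 : δ ≤ 1) :
    ∃ k : ℕ, 1 ≤ k ∧ Int.fract ((k:ℝ)*α) < δ := by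
  obtain ⟨M0, hM0⟩ := exists_nat_gt (1/δ)
  have hMpos : 0 < M0 + 1 := Nat.succ_pos _
  obtain ⟨j, k, hk0, hkM, hjk⟩ := Real.exists_int_int_abs_mul_sub_le α hMpos
  have hδM : (1:ℝ)/((M0:ℝ)+1+1) < δ := by
    rw [div_lt_iff₀ (by positivity)]
    have h1 : 1 < δ * M0 := by
      rw [div_lt_iff₀ hδ0] at hM0
      linarith
    nlinarith
  have hlt : |(k:ℝ)*α - j| < δ := by
    refine lt_of_le_of_lt hjk ?_
    convert hδM using 2
    · rfl
    push_cast
    ring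
  set kn := k.toNat with hknd
  have hkncast : ((kn:ℕ):ℝ) = (k:ℝ) := by
    have := Int.toNat_of_nonneg hk0.le
    rw [hknd]
    exact_mod_cast congrArg (Int.cast : ℤ → ℝ) this
  have hk1 : 1 ≤ kn := by omega
  set u := ((kn:ℕ):ℝ)*α - j with hud
  have hu : |u| < δ := by rw [hud, hkncast]; exact hlt
  have huirr : Irrational (((kn:ℕ):ℝ)*α) := hα.natCast_mul (by omega)
  have hune : u ≠ 0 := sub_ne_zero.mpr (huirr.ne_int j)
  have hfr : Int.fract (((kn:ℕ):ℝ)*α) = Int.fract u := by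
    rw [hud, Int.fract_sub_intCast]
  rw [abs_lt] at hu
  rcases lt_or_gt_of_ne hune with hneg | hpos
  · -- u < 0 : fract = u + 1 > 1 - δ; use multiples
    have hfu : Int.fract u = u + 1 := by
      rw [← Int.fract_add_intCast u 1]
      push_cast
      exact Int.fract_eq_self.mpr ⟨by linarith, by linarith⟩
    set η := -u with hηd
    have hη0 : 0 < η := by linarith
    have hη1 : η < 1 := by linarith
    set r := ⌈1/η⌉₊ - 1 with hrd
    have hceil2 : 2 ≤ ⌈1/η⌉₊ := by
      have : (1:ℝ) < 1/η := by
        rw [lt_div_iff₀ hη0]; linarith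
      have := Nat.lt_ceil.mpr (by exact_mod_cast this : ((1:ℕ):ℝ) < 1/η)
      omega
    have hr1 : 1 ≤ r := by omega
    have hrlt : (r:ℝ) < 1/η := by
      have h := Nat.ceil_lt_add_one (le_of_lt (by positivity : (0:ℝ) < 1/η))
      have hc : ((r:ℕ):ℝ) = (⌈1/η⌉₊ : ℝ) - 1 := by
        rw [hrd]; push_cast [Nat.cast_sub (by omega : 1 ≤ ⌈1/η⌉₊)]; ring
      rw [hc]; linarith
    have hrge : 1 ≤ ((r:ℝ)+1) * η := by
      have h := Nat.le_ceil (1/η)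
      have hc : ((r:ℝ)+1) = (⌈1/η⌉₊ : ℝ) := by
        rw [hrd]; push_cast [Nat.cast_sub (by omega : 1 ≤ ⌈1/η⌉₊)]; ring
      rw [hc]
      calc (1:ℝ) = (1/η) * η := by field_simp
        _ ≤ (⌈1/η⌉₊ : ℝ) * η := by apply mul_le_mul_of_nonneg_right h hη0.le
    have hrη1 : (r:ℝ) * η < 1 := by
      calc (r:ℝ) * η < (1/η) * η := by apply mul_lt_mul_of_pos_right hrlt hη0
        _ = 1 := by field_simp
    refine ⟨r * kn, Nat.mul_pos (by omega) (by omega), ?_⟩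
    have hb01 : 0 ≤ 1 - (r:ℝ)*η ∧ 1 - (r:ℝ)*η < 1 := by
      constructor
      · linarith
      · nlinarith
    have hfval : Int.fract (((r * kn : ℕ):ℝ)*α) = 1 - (r:ℝ)*η := by
      have hz : ((r * kn : ℕ):ℝ)*α - (1 - (r:ℝ)*η) = ((r * ⌊((kn:ℕ):ℝ)*α⌋ + r - 1 : ℤ) : ℝ) := by
        have hfloor : ((kn:ℕ):ℝ)*α = (⌊((kn:ℕ):ℝ)*α⌋ : ℝ) + Int.fract (((kn:ℕ):ℝ)*α) := by
          rw [Int.floor_add_fract]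
        have h2 : Int.fract (((kn:ℕ):ℝ)*α) = 1 - η := by rw [hfr, hfu, hηd]; ring
        push_cast
        rw [mul_comm ((r:ℝ)) ((kn:ℝ))] at *
        nlinarith [hfloor, h2]
      have : Int.fract (((r * kn : ℕ):ℝ)*α) = Int.fract (1 - (r:ℝ)*η) := by
        apply Int.fract_eq_fract.mpr ⟨_, hz⟩
      rw [this]
      exact Int.fract_eq_self.mpr hb01
    rw [hfval]
    linarith
  · refine ⟨kn, hk1, ?_⟩
    rw [hfr, Int.fract_eq_self.mpr ⟨hpos.le, by linarith⟩]
    linarith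

lemma small_fract {α : ℝ} (hα : Irrational α) {δ : ℝ} (hδ : 0 < δ) (N : ℕ) :
    ∃ k : ℕ, N ≤ k ∧ 0 < Int.fract ((k:ℝ)*α) ∧ Int.fract ((k:ℝ)*α) < δ := by
  set δ' := min δ 1 / ((N:ℝ)+1) with hδ'd
  have hN1 : (0:ℝ) < (N:ℝ)+1 := by positivity
  have hδ'0 : 0 < δ' := div_pos (lt_min hδ one_pos) hN1
  have hδ'1 : δ' ≤ 1 := by
    rw [hδ'd, div_le_one hN1]
    have h1 : min δ 1 ≤ 1 := min_le_right _ _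
    have h2 : (1:ℝ) ≤ (N:ℝ)+1 := by
      have : (0:ℝ) ≤ (N:ℝ) := Nat.cast_nonneg N
      linarith
    linarith
  obtain ⟨k1, hk11, hk1δ⟩ := small_fract_one hα hδ'0 hδ'1
  set f1 := Int.fract ((k1:ℝ)*α) with hf1d
  have hf1pos : 0 < f1 := fract_nat_pos hα hk11
  have hmul : ((N:ℝ)+1) * f1 < min δ 1 := by
    have : ((N:ℝ)+1) * δ' = min δ 1 := by
      rw [hδ'd]; field_simp
    nlinarith
  have hb : 0 ≤ ((N:ℝ)+1) * f1 ∧ ((N:ℝ)+1) * f1 < 1 := by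
    constructor
    · positivity
    · exact lt_of_lt_of_le hmul (min_le_right _ _)
  have hge : N ≤ (N+1) * k1 := by
    have := Nat.le_mul_of_pos_right (N+1) (by omega : 0 < k1)
    omega
  refine ⟨(N+1) * k1, hge, ?_⟩
  have hfval : Int.fract ((((N+1) * k1 : ℕ):ℝ)*α) = ((N:ℝ)+1) * f1 := by
    have hz : (((N+1) * k1 : ℕ):ℝ)*α - ((N:ℝ)+1) * f1 = ((((N:ℤ)+1) * ⌊(k1:ℝ)*α⌋ : ℤ) : ℝ) := by
      have hfloor : (k1:ℝ)*α = (⌊(k1:ℝ)*α⌋ : ℝ) + f1 := by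
        rw [hf1d, Int.floor_add_fract]
      push_cast
      nlinarith [hfloor]
    have heq : Int.fract ((((N+1) * k1 : ℕ):ℝ)*α) = Int.fract (((N:ℝ)+1) * f1) :=
      Int.fract_eq_fract.mpr ⟨_, hz⟩
    rw [heq, Int.fract_eq_self.mpr hb]
  rw [hfval]
  refine ⟨by positivity, lt_of_lt_of_le hmul (min_le_left _ _)⟩

lemma exists_rep {α : ℝ} (hα : Irrational α) (h0 : 0 < α) (n : ℕ) {p : ℝ}
    (hp : p ∈ Ppts α n) :
    ∃ m : ℕ, mu α n (Int.fract (((m:ℝ)+1)*α)) = p := by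
  obtain ⟨j, hjr, rfl⟩ := Finset.mem_image.mp hp
  rw [Finset.mem_range] at hjr
  classical
  set U := (Ppts α n).filter (fun q => tpt α j < q) with hUd
  set u : ℝ := if h : U.Nonempty then U.min' h else 1 with hud
  have hpu : tpt α j < u := by
    rw [hud]
    split
    · next h =>
      have h2 : U.min' h ∈ Finset.filter (fun q => tpt α j < q) (Ppts α n) :=
        Finset.min'_mem U h
      exact (Finset.mem_filter.mp h2).2
    · exact tpt_lt_one hα h0 j
  have hu1 : u ≤ 1 := by
    rw [hud]
    split
    · next h =>
      have hm : U.min' h ∈ Finset.filter (fun q => tpt α j < q) (Ppts α n) :=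
        Finset.min'_mem U h
      rw [Finset.mem_filter] at hm
      obtain ⟨j', _, hj'⟩ := Finset.mem_image.mp hm.1
      rw [← hj']
      exact (tpt_lt_one hα h0 j').le
    · exact le_refl 1
  obtain ⟨k, hkN, hkpos, hkδ⟩ := small_fract hα (by linarith : (0:ℝ) < u - tpt α j) (j+1)
  set ε := Int.fract ((k:ℝ)*α) with hεd
  set x := tpt α j + ε with hxd
  have hxu : x < u := by rw [hxd]; linarith
  have hx0 : 0 ≤ x := by
    have := tpt_nonneg α j
    rw [hxd]; linarith
  have hx1 : x < 1 := lt_of_lt_of_le hxu hu1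
  refine ⟨k - j - 1, ?_⟩
  have hcast : (((k - j - 1 : ℕ):ℝ)+1) = ((k:ℝ) - (j:ℝ)) := by
    have : (k - j - 1 : ℕ) + 1 = k - j := by omega
    rw [← Nat.cast_add_one, this, Nat.cast_sub (by omega)]
  have hxval : Int.fract ((((k - j - 1 : ℕ):ℝ)+1)*α) = x := by
    rw [hcast]
    have heq : Int.fract (((k:ℝ) - (j:ℝ))*α) = Int.fract x := by
      apply Int.fract_eq_fract.mpr
      rcases Nat.eq_zero_or_pos j with rfl | hjpos
      · refine ⟨⌊(k:ℝ)*α⌋, ?_⟩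
        rw [hxd]
        simp only [tpt, if_pos rfl, Nat.cast_zero, zero_add, hεd]
        unfold Int.fract
        push_cast
        ring
      · refine ⟨⌊(k:ℝ)*α⌋ + ⌊-((j:ℝ)*α)⌋, ?_⟩
        rw [hxd]
        have htj : tpt α j = Int.fract (-((j:ℝ)*α)) := by
          unfold tpt; rw [if_neg (by omega)]
        rw [htj, hεd]
        unfold Int.fract
        push_cast
        ring
    rw [heq, Int.fract_eq_self.mpr ⟨hx0, hx1⟩]
  rw [hxval]
  apply le_antisymm
  · by_contra hcon
    push_neg at hcon
    have hmm := mu_mem α n hx0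
    have hmemU : mu α n x ∈ U := by
      show mu α n x ∈ Finset.filter (fun q => tpt α j < q) (Ppts α n)
      rw [Finset.mem_filter]
      exact ⟨hmm.1, hcon⟩
    have hune : U.Nonempty := ⟨_, hmemU⟩
    have : u ≤ mu α n x := by
      rw [hud, dif_pos hune]
      exact Finset.min'_le U _ hmemU
    linarith [hmm.2]
  · apply le_mu α n hx0 hp
    rw [hxd]
    linarith

lemma card_P {α : ℝ} (hα : Irrational α) (n : ℕ) : (Ppts α n).card = n + 1 := by
  rw [Ppts, Finset.card_image_of_injOn (fun j _ k _ h => tpt_inj hα h), Finset.card_range]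

lemma card_filterP {α : ℝ} (hα : Irrational α) {n : ℕ} (hn : 1 ≤ n) :
    ((Ppts α n).filter (fun q => tpt α n ≤ q)).card = B α n + 1 := by
  classical
  rw [Ppts, Finset.filter_image,
    Finset.card_image_of_injOn (fun j _ k _ h => tpt_inj hα h)]
  have hset : (Finset.range (n+1)).filter (fun j => tpt α n ≤ tpt α j)
      = insert n ((Finset.Ico 1 n).filter
          (fun q : ℕ => Int.fract ((q:ℝ)*α) < Int.fract ((n:ℝ)*α))) := by
    ext j
    simp only [Finset.mem_filter, Finset.mem_range, Finset.mem_insert, Finset.mem_Ico]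
    constructor
    · rintro ⟨hjlt, hle⟩
      rcases Nat.eq_zero_or_pos j with rfl | hjpos
      · exfalso
        have hpos := tpt_pos hα hn
        have h0le : tpt α 0 = 0 := by simp [tpt]
        rw [h0le] at hle
        linarith
      · rcases eq_or_ne j n with rfl | hne
        · left; rfl
        · right
          have hord := (tpt_order hα hn hjpos).mp hle
          exact ⟨⟨hjpos, by omega⟩, lt_of_le_of_ne hord (fract_nat_ne hα hne)⟩
    · rintro (rfl | ⟨⟨h1j, hjn⟩, hfr⟩)
      · exact ⟨by omega, le_refl _⟩
      · exact ⟨by omega, (tpt_order hα hn h1j).mpr hfr.le⟩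
  rw [hset, Finset.card_insert_of_notMem (by simp)]
  rfl

open Classical in
noncomputable def Phi (α : ℝ) (n : ℕ) (p : ℝ) : Fin n → ℤ :=
  if h : ∃ m : ℕ, mu α n (Int.fract (((m:ℝ)+1)*α)) = p
  then wrd α n (Int.fract (((h.choose:ℝ)+1)*α)) else fun _ => 0

lemma Phi_spec {α : ℝ} (n : ℕ) {p : ℝ}
    (hex : ∃ m : ℕ, mu α n (Int.fract (((m:ℝ)+1)*α)) = p) :
    Phi α n p = wrd α n (Int.fract (((hex.choose:ℝ)+1)*α)) := by
  unfold Phi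
  rw [dif_pos hex]

theorem stmt_10 (α : ℝ) (hα : Irrational α) (h0 : 0 < α) (h1 : α < 1)
    (n : ℕ) (hn : 1 ≤ n) :
    (∀ w ∈ factorSet (cword α) n,
      (height w : ℤ) = ⌊(n : ℝ) * α⌋ ∨ (height w : ℤ) = ⌊(n : ℝ) * α⌋ + 1) ∧
    ({w ∈ factorSet (cword α) n | (height w : ℤ) = ⌊(n : ℝ) * α⌋ + 1}.ncard
        = B α n + 1) ∧
    (({w ∈ factorSet (cword α) n | (height w : ℤ) = ⌊(n : ℝ) * α⌋}.ncard : ℤ)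
        = (n : ℤ) - B α n) := by
  classical
  have hxIco : ∀ m : ℕ, Int.fract (((m:ℝ)+1)*α) ∈ Set.Ico (0:ℝ) 1 :=
    fun m => ⟨Int.fract_nonneg _, Int.fract_lt_one _⟩
  have hheight : ∀ m : ℕ, (height (wrd α n (Int.fract (((m:ℝ)+1)*α))) : ℤ)
      = ⌊(n:ℝ)*α⌋ + (if tpt α n ≤ Int.fract (((m:ℝ)+1)*α) then 1 else 0) := by
    intro m
    rw [height_wrd h0 h1 n (hxIco m), floor_split hα (hxIco m) hn]
  -- injectivity of Phi on subsets of Ppts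
  have hinj : ∀ s : Finset ℝ, (∀ q ∈ s, q ∈ Ppts α n) → Set.InjOn (Phi α n) ↑s := by
    intro s hs p hp q hq heq
    have hexp := exists_rep hα h0 n (hs p hp)
    have hexq := exists_rep hα h0 n (hs q hq)
    rw [Phi_spec n hexp, Phi_spec n hexq] at heq
    have := mu_eq_of_wrd hα n (hxIco _) (hxIco _) heq
    rw [hexp.choose_spec, hexq.choose_spec] at this
    exact this
  -- set descriptions
  have hS : ∀ P : Prop, ∀ b : ℤ, True := fun _ _ => trivial
  have key : ∀ (cond : ℝ → Prop) (_ : DecidablePred cond) (b : ℤ),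
      (∀ m : ℕ, ((if tpt α n ≤ Int.fract (((m:ℝ)+1)*α) then 1 else 0 : ℤ) = b - ⌊(n:ℝ)*α⌋)
          ↔ cond (mu α n (Int.fract (((m:ℝ)+1)*α)))) →
      (∀ p ∈ Ppts α n, ∀ x : ℝ, 0 ≤ x → mu α n x = p → (cond p ↔ cond (mu α n x))) →
      {w ∈ factorSet (cword α) n | (height w : ℤ) = b}
        = ↑(((Ppts α n).filter cond).image (Phi α n)) := by
    intro cond hdec b hcond htriv
    ext w
    simp only [Set.mem_setOf_eq, Finset.coe_image, Set.mem_image, Finset.mem_coe,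
      Finset.mem_filter]
    constructor
    · rintro ⟨hwf, hh⟩
      obtain ⟨m, rfl⟩ := (mem_factor_iff α n _).mp hwf
      rw [hheight m] at hh
      have hc : cond (mu α n (Int.fract (((m:ℝ)+1)*α))) := (hcond m).mp (by omega)
      refine ⟨mu α n (Int.fract (((m:ℝ)+1)*α)), ⟨(mu_mem α n (hxIco m).1).1, hc⟩, ?_⟩
      have hex : ∃ m' : ℕ, mu α n (Int.fract (((m':ℝ)+1)*α))
          = mu α n (Int.fract (((m:ℝ)+1)*α)) := ⟨m, rfl⟩
      rw [Phi_spec n hex]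
      exact wrd_eq_of_mu hα n (hxIco _) (hxIco m) hex.choose_spec
    · rintro ⟨p, ⟨hpP, hc⟩, rfl⟩
      have hex := exists_rep hα h0 n hpP
      rw [Phi_spec n hex]
      have hm0 := hex.choose_spec
      refine ⟨(mem_factor_iff α n _).mpr ⟨hex.choose, rfl⟩, ?_⟩
      rw [hheight hex.choose]
      have hcm : cond (mu α n (Int.fract (((hex.choose:ℝ)+1)*α))) :=
        (htriv p hpP _ (hxIco _).1 hm0).mp hc
      have := (hcond hex.choose).mpr hcm
      omega
  -- the two instantiations
  have hiff1 : ∀ m : ℕ, (tpt α n ≤ Int.fract (((m:ℝ)+1)*α)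
      ↔ tpt α n ≤ mu α n (Int.fract (((m:ℝ)+1)*α))) :=
    fun m => tpt_le_iff α (le_refl n) (hxIco m).1
  have hS1 : {w ∈ factorSet (cword α) n | (height w : ℤ) = ⌊(n : ℝ) * α⌋ + 1}
      = ↑(((Ppts α n).filter (fun q => tpt α n ≤ q)).image (Phi α n)) := by
    apply key (fun q => tpt α n ≤ q) (fun q => inferInstance) (⌊(n:ℝ)*α⌋ + 1)
    · intro m
      constructor
      · intro h
        by_cases hc : tpt α n ≤ Int.fract (((m:ℝ)+1)*α)
        · exact (hiff1 m).mp hc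
        · rw [if_neg hc] at h; omega
      · intro h
        rw [if_pos ((hiff1 m).mpr h)]
        omega
    · intro p hp x hx0 hmu
      rw [hmu]
  have hS0 : {w ∈ factorSet (cword α) n | (height w : ℤ) = ⌊(n : ℝ) * α⌋}
      = ↑(((Ppts α n).filter (fun q => ¬ tpt α n ≤ q)).image (Phi α n)) := by
    apply key (fun q => ¬ tpt α n ≤ q) (fun q => inferInstance) ⌊(n:ℝ)*α⌋
    · intro m
      constructor
      · intro h
        intro hc
        rw [if_pos ((hiff1 m).mpr hc)] at h
        omega
      · intro h
        rw [if_neg (fun hc => h ((hiff1 m).mp hc))]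
        omega
    · intro p hp x hx0 hmu
      rw [hmu]
  have hcard1 : ({w ∈ factorSet (cword α) n | (height w : ℤ) = ⌊(n : ℝ) * α⌋ + 1}.ncard
      = B α n + 1) := by
    rw [hS1, Set.ncard_coe_finset,
      Finset.card_image_of_injOn (hinj _ (fun q hq => (Finset.mem_filter.mp hq).1)),
      card_filterP hα hn]
  have hsum := Finset.card_filter_add_card_filter_not
    (s := Ppts α n) (p := fun q => tpt α n ≤ q)
  rw [card_P hα n, card_filterP hα hn] at hsum
  have hcard0 : ({w ∈ factorSet (cword α) n | (height w : ℤ) = ⌊(n : ℝ) * α⌋}.ncard : ℤ)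
      = (n : ℤ) - B α n := by
    rw [hS0, Set.ncard_coe_finset,
      Finset.card_image_of_injOn (hinj _ (fun q hq => (Finset.mem_filter.mp hq).1))]
    omega
  refine ⟨?_, hcard1, hcard0⟩
  intro w hw
  obtain ⟨m, rfl⟩ := (mem_factor_iff α n _).mp hw
  rw [hheight m]
  by_cases hc : tpt α n ≤ Int.fract (((m:ℝ)+1)*α)
  · right; rw [if_pos hc]
  · left; rw [if_neg hc]; omega
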